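/- arXiv:2005.00799 — 2 statements merged into one kernel-verified Lean document; each statement's English description precedes it below -/
import Mathlib

section
/- Let p : [0,∞) → ℝ be C¹ with p(0)=0 and p'>0 on (0,∞), let H be its Helmholtz function, and suppose that ā·p − H is convex on [0,∞) for some ā > 0. Then there exists R̄ > 0 and a constant c > 0 such that for all ϱ > R̄, c·ϱ^(γ−1) ≤ p'(ϱ), where γ = 1 + 1/ā. -/
open Set MeasureTheory intervalIntegral

/-- If `ā p − H` is convex on `[0,∞)` for some `ā > 0`, where `H` is the Helmholtz
function of `p`, then `p'(ϱ) ≳ ϱ^(γ−1)` for large `ϱ`, with `γ = 1 + 1/ā`. -/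
theorem pressure_growth_from_convexity (p H : ℝ → ℝ)
    (hp : ContDiffOn ℝ 1 p (Set.Ici 0)) (hp0 : p 0 = 0)
    (hp' : ∀ ϱ > (0 : ℝ), 0 < deriv p ϱ)
    (hH : ∀ ϱ : ℝ, H ϱ = ϱ * ∫ z in (1 : ℝ)..ϱ, p z / z ^ 2)
    (abar : ℝ) (habar : 0 < abar)
    (hconv : ConvexOn ℝ (Set.Ici 0) (fun ϱ => abar * p ϱ - H ϱ)) :
    ∃ R > (0 : ℝ), ∃ c > (0 : ℝ), ∀ ϱ > R,
      c * ϱ ^ ((1 + 1 / abar) - 1) ≤ deriv p ϱ := by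
  have hexp : (1 + 1 / abar) - 1 = 1 / abar := by ring
  rw [hexp]
  -- p is differentiable on (0,∞)
  have hpdiff : ∀ t > (0 : ℝ), HasDerivAt p (deriv p t) t := by
    intro t ht
    have h1 : DifferentiableOn ℝ p (Set.Ici 0) := hp.differentiableOn one_ne_zero
    exact (h1.differentiableAt (Ici_mem_nhds ht)).hasDerivAt
  -- continuity of p and deriv p
  have hpc : ContinuousOn p (Set.Ici 0) := hp.continuousOn
  have hpcIoi : ContinuousOn p (Set.Ioi 0) := hpc.mono Ioi_subset_Ici_self
  have hgc : ContinuousOn (deriv p) (Set.Ioi 0) := by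
    have h1 : ContinuousOn (derivWithin p (Set.Ici 0)) (Set.Ici 0) :=
      hp.continuousOn_derivWithin (uniqueDiffOn_Ici 0) le_rfl
    refine (h1.mono Ioi_subset_Ici_self).congr ?_
    intro t ht
    exact (derivWithin_of_mem_nhds (Ici_mem_nhds ht)).symm
  -- integrands
  have hf₁C : ContinuousOn (fun z => p z / z ^ 2) (Set.Ioi 0) := by
    exact hpcIoi.div (continuousOn_pow 2) (fun z hz => pow_ne_zero _ (ne_of_gt hz))
  have hf₂C : ContinuousOn (fun z => deriv p z / z) (Set.Ioi 0) := by
    exact hgc.div continuousOn_id (fun z hz => ne_of_gt hz)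
  have hsub : ∀ t > (0 : ℝ), Set.uIcc 1 t ⊆ Set.Ioi 0 := by
    intro t ht z hz
    have := hz.1
    have hmin : (0:ℝ) < min 1 t := lt_min one_pos ht
    exact lt_of_lt_of_le hmin this
  have hint₁ : ∀ t > (0 : ℝ), IntervalIntegrable (fun z => p z / z ^ 2) volume 1 t := by
    intro t ht
    exact (hf₁C.mono (hsub t ht)).intervalIntegrable
  have hint₂ : ∀ t > (0 : ℝ), IntervalIntegrable (fun z => deriv p z / z) volume 1 t := by
    intro t ht
    exact (hf₂C.mono (hsub t ht)).intervalIntegrable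
  -- FTC derivatives
  set u : ℝ → ℝ := fun t => ∫ z in (1:ℝ)..t, deriv p z / z with hu_def
  have hu : ∀ t > (0 : ℝ), HasDerivAt u (deriv p t / t) t := by
    intro t ht
    exact integral_hasDerivAt_right (hint₂ t ht)
      (hf₂C.stronglyMeasurableAtFilter isOpen_Ioi t ht)
      (hf₂C.continuousAt (Ioi_mem_nhds ht))
  have hu₀ : ∀ t > (0 : ℝ), HasDerivAt (fun s => ∫ z in (1:ℝ)..s, p z / z ^ 2) (p t / t ^ 2) t := by
    intro t ht
    exact integral_hasDerivAt_right (hint₁ t ht)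
      (hf₁C.stronglyMeasurableAtFilter isOpen_Ioi t ht)
      (hf₁C.continuousAt (Ioi_mem_nhds ht))
  -- integration by parts identity
  have hIBP : ∀ t > (0 : ℝ),
      (∫ z in (1:ℝ)..t, (deriv p z / z - p z / z ^ 2)) = p t / t - p 1 := by
    intro t ht
    have := intervalIntegral.integral_eq_sub_of_hasDerivAt (f := fun z => p z / z)
      (f' := fun z => deriv p z / z - p z / z ^ 2) (a := 1) (b := t)
      (fun z hz => ?_) ((hf₂C.mono (hsub t ht)).sub (hf₁C.mono (hsub t ht))).intervalIntegrable
    · rw [this]; ring_nf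
    · have hz0 : (0:ℝ) < z := hsub t ht hz
      have hd : HasDerivAt (fun z => p z / z)
          ((deriv p z * z - p z * 1) / z ^ 2) z :=
        (hpdiff z hz0).div (hasDerivAt_id z) (ne_of_gt hz0)
      refine hd.congr_deriv ?_
      beta_reduce
      have hz : z ≠ 0 := ne_of_gt hz0
      rw [div_sub_div _ _ hz (pow_ne_zero 2 hz), div_eq_div_iff (by positivity) (by positivity)]
      ring
  -- derivative of H
  have hHfun : H = fun t => t * ∫ z in (1:ℝ)..t, p z / z ^ 2 := funext hH
  have hH' : ∀ t > (0 : ℝ), HasDerivAt H (p 1 + u t) t := by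
    intro t ht
    have hprim : (∫ z in (1:ℝ)..t, p z / z ^ 2) = u t - (p t / t - p 1) := by
      have hsplit : (∫ z in (1:ℝ)..t, (deriv p z / z - p z / z ^ 2))
          = u t - ∫ z in (1:ℝ)..t, p z / z ^ 2 :=
        intervalIntegral.integral_sub (hint₂ t ht) (hint₁ t ht)
      have := hIBP t ht
      rw [hsplit] at this
      linarith
    have hd : HasDerivAt (fun s => s * ∫ z in (1:ℝ)..s, p z / z ^ 2)
        (1 * (∫ z in (1:ℝ)..t, p z / z ^ 2) + t * (p t / t ^ 2)) t :=
      (hasDerivAt_id t).mul (hu₀ t ht)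
    rw [hHfun]
    convert hd using 1
    rw [hprim]
    field_simp
    ring
  -- derivative of F = abar * p - H
  have hF' : ∀ t > (0 : ℝ),
      HasDerivAt (fun ϱ => abar * p ϱ - H ϱ) (abar * deriv p t - (p 1 + u t)) t := by
    intro t ht
    exact ((hpdiff t ht).const_mul abar).sub (hH' t ht)
  -- key Gronwall-type inequality from convexity
  have hu1 : u 1 = 0 := intervalIntegral.integral_same
  have key : ∀ t > (1 : ℝ), abar * deriv p 1 + u t ≤ abar * deriv p t := by
    intro t ht
    have ht0 : (0:ℝ) < t := lt_trans one_pos ht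
    have h1S : (1:ℝ) ∈ Set.Ici (0:ℝ) := by norm_num
    have htS : t ∈ Set.Ici (0:ℝ) := le_of_lt ht0
    have s1 := hconv.le_slope_of_hasDerivAt h1S htS ht (hF' 1 one_pos)
    have s2 := hconv.slope_le_of_hasDerivAt h1S htS ht (hF' t ht0)
    have := le_trans s1 s2
    rw [hu1] at this
    linarith
  set c₁ : ℝ := deriv p 1 with hc₁def
  have hc₁ : 0 < c₁ := hp' 1 one_pos
  -- the comparison function v
  set r : ℝ := -(1 / abar) with hrdef
  set v : ℝ → ℝ := fun t => (abar * c₁ + u t) * t ^ r with hvdef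
  have hudiff : ∀ t ∈ Set.Ici (1:ℝ), ContinuousAt u t := by
    intro t ht
    exact (hu t (lt_of_lt_of_le one_pos ht)).differentiableAt.continuousAt
  have hvcont : ContinuousOn v (Set.Ici 1) := by
    intro t ht
    refine ContinuousAt.continuousWithinAt ?_
    have h1 : ContinuousAt (fun t : ℝ => t ^ r) t :=
      Real.continuousAt_rpow_const t r (Or.inl (ne_of_gt (lt_of_lt_of_le one_pos ht)))
    exact (continuousAt_const.add (hudiff t ht)).mul h1
  have hv' : ∀ t ∈ interior (Set.Ici (1:ℝ)), HasDerivAt v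
      ((deriv p t / t) * t ^ r + (abar * c₁ + u t) * (r * t ^ (r - 1))) t := by
    intro t ht
    rw [interior_Ici] at ht
    have ht0 : (0:ℝ) < t := lt_trans one_pos ht
    have h1 : HasDerivAt (fun t : ℝ => t ^ r) (r * t ^ (r - 1)) t :=
      Real.hasDerivAt_rpow_const (Or.inl (ne_of_gt ht0))
    have hd := ((hasDerivAt_const t (abar * c₁)).add (hu t ht0)).mul h1
    exact hd.congr_deriv (by simp)
  have hvderiv_nonneg : ∀ t ∈ interior (Set.Ici (1:ℝ)), 0 ≤ deriv v t := by
    intro t ht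
    rw [(hv' t ht).deriv]
    rw [interior_Ici] at ht
    have ht0 : (0:ℝ) < t := lt_trans one_pos ht
    have htr1 : (0:ℝ) < t ^ (r - 1) := Real.rpow_pos_of_pos ht0 _
    have hkey := key t ht
    have hg0 : 0 < deriv p t := hp' t ht0
    have htr : t ^ r = t ^ (r - 1) * t := by
      rw [← Real.rpow_add_one (ne_of_gt ht0)]
      ring_nf
    have e1 : (deriv p t / t) * t ^ r = deriv p t * t ^ (r - 1) := by
      rw [htr]; field_simp
    rw [e1]
    have e2 : (abar * c₁ + u t) * (r * t ^ (r - 1)) ≥ (abar * deriv p t) * (r * t ^ (r - 1)) := by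
      have hrneg : r * t ^ (r - 1) ≤ 0 := by
        apply mul_nonpos_of_nonpos_of_nonneg
        · rw [hrdef]; simp [le_of_lt, habar, one_div, inv_nonneg.mpr habar.le]
        · exact le_of_lt htr1
      exact mul_le_mul_of_nonpos_right hkey hrneg
    have har : abar * r = -1 := by
      rw [hrdef]; field_simp
    have e3 : deriv p t * t ^ (r - 1) + (abar * deriv p t) * (r * t ^ (r - 1)) = 0 := by
      have h4 : (abar * deriv p t) * (r * t ^ (r - 1))
          = (abar * r) * (deriv p t * t ^ (r - 1)) := by ring
      rw [h4, har]; ring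
    linarith [e2, e3]
  have hvmono : MonotoneOn v (Set.Ici 1) :=
    monotoneOn_of_deriv_nonneg (convex_Ici 1) hvcont
      (fun t ht => (hv' t ht).differentiableAt.differentiableWithinAt) hvderiv_nonneg
  -- conclude
  refine ⟨1, one_pos, c₁, hc₁, ?_⟩
  intro t ht
  have ht0 : (0:ℝ) < t := lt_trans one_pos ht
  have hv1 : v 1 = abar * c₁ := by
    simp [hvdef, hu1, Real.one_rpow]
  have hmon := hvmono (by norm_num : (1:ℝ) ∈ Set.Ici (1:ℝ)) (le_of_lt ht : t ∈ Set.Ici (1:ℝ)) (le_of_lt ht)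
  rw [hv1] at hmon
  -- v t = (abar*c₁ + u t) * t ^ r ≥ abar * c₁
  have hts : (0:ℝ) < t ^ (1/abar) := Real.rpow_pos_of_pos ht0 _
  have hrinv : t ^ r = (t ^ (1/abar))⁻¹ := by
    rw [hrdef, Real.rpow_neg (le_of_lt ht0)]
  have hstep : abar * c₁ * t ^ (1/abar) ≤ abar * c₁ + u t := by
    have : abar * c₁ ≤ (abar * c₁ + u t) / t ^ (1/abar) := by
      rw [div_eq_mul_inv, ← hrinv]; exact hmon
    calc abar * c₁ * t ^ (1/abar) ≤ ((abar * c₁ + u t) / t ^ (1/abar)) * t ^ (1/abar) := by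
          exact mul_le_mul_of_nonneg_right this (le_of_lt hts)
      _ = abar * c₁ + u t := by field_simp
  have hfinal := le_trans hstep (key t ht)
  have : c₁ * t ^ (1/abar) ≤ deriv p t := by
    rw [← mul_le_mul_iff_right₀ habar]
    calc abar * (c₁ * t ^ (1/abar)) = abar * c₁ * t ^ (1/abar) := by ring
      _ ≤ abar * deriv p t := hfinal
  exact this
end

section
/- Let p : [0,∞) → ℝ be C¹ with p(0)=0 and p'>0 on (0,∞), let H be its Helmholtz function, suppose H − a̲·p and ā·p − H are convex for some 0 < a̲ < ā, and define E(ϱ|r) = H(ϱ) − H'(r)(ϱ−r) − H(r). Then for every 0 < a < b < ∞ there exists c = c(a,b) > 0 such that for all ϱ ∈ [0,∞) and all r ∈ [a,b]: E(ϱ|r) ≥ c·( 1 + ϱ + p(ϱ) ) whenever ϱ ∉ [a/2, 2b], and E(ϱ|r) ≥ c·(ϱ−r)² whenever ϱ ∈ [a/2, 2b]. -/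
open Set intervalIntegral

lemma mono_aux (f f' : ℝ → ℝ) (A B : ℝ)
    (hd : ∀ s ∈ Icc A B, HasDerivAt f (f' s) s)
    (h0 : ∀ s ∈ Ioo A B, 0 ≤ f' s) : MonotoneOn f (Icc A B) := by
  apply monotoneOn_of_deriv_nonneg (convex_Icc A B)
    (fun s hs => (hd s hs).continuousAt.continuousWithinAt)
  · intro s hs
    rw [interior_Icc] at hs
    exact ((hd s (Ioo_subset_Icc_self hs)).differentiableAt).differentiableWithinAt
  · intro s hs
    rw [interior_Icc] at hs
    rw [(hd s (Ioo_subset_Icc_self hs)).deriv]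
    exact h0 s hs

lemma anti_aux (f f' : ℝ → ℝ) (A B : ℝ)
    (hd : ∀ s ∈ Icc A B, HasDerivAt f (f' s) s)
    (h0 : ∀ s ∈ Ioo A B, f' s ≤ 0) : AntitoneOn f (Icc A B) := by
  apply antitoneOn_of_deriv_nonpos (convex_Icc A B)
    (fun s hs => (hd s hs).continuousAt.continuousWithinAt)
  · intro s hs
    rw [interior_Icc] at hs
    exact ((hd s (Ioo_subset_Icc_self hs)).differentiableAt).differentiableWithinAt
  · intro s hs
    rw [interior_Icc] at hs
    rw [(hd s (Ioo_subset_Icc_self hs)).deriv]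
    exact h0 s hs

lemma nonneg_aux (f f' : ℝ → ℝ) (A B r : ℝ) (hr : r ∈ Icc A B)
    (hd : ∀ s ∈ Icc A B, HasDerivAt f (f' s) s)
    (hmono : MonotoneOn f' (Icc A B)) (hf'r : f' r = 0) (hfr : f r = 0) :
    ∀ x ∈ Icc A B, 0 ≤ f x := by
  intro x hx
  rcases le_total x r with hxr | hrx
  · have hanti : AntitoneOn f (Icc A r) := by
      apply anti_aux f f' A r (fun s hs => hd s ⟨hs.1, hs.2.trans hr.2⟩)
      intro s hs
      rw [← hf'r]
      exact hmono ⟨hs.1.le, hs.2.le.trans hr.2⟩ hr hs.2.le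
    have := hanti ⟨hx.1, hxr⟩ ⟨hx.1.trans hxr, le_refl r⟩ hxr
    rw [hfr] at this
    exact this
  · have hmon : MonotoneOn f (Icc r B) := by
      apply mono_aux f f' r B (fun s hs => hd s ⟨hr.1.trans hs.1, hs.2⟩)
      intro s hs
      rw [← hf'r]
      exact hmono hr ⟨hr.1.trans hs.1.le, hs.2.le⟩ hs.1.le
    have := hmon ⟨le_refl r, hrx.trans hx.2⟩ ⟨hrx, hx.2⟩ hrx
    rw [hfr] at this
    exact this


set_option maxHeartbeats 2000000 in
/-- Lower bound on the relative energy `E(ϱ|r) = H(ϱ) − H'(r)(ϱ−r) − H(r)`: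
for `r` in a compact set `[a,b] ⊂ (0,∞)` there is `c = c(a,b) > 0` such that
`E(ϱ|r) ≥ c (1 + ϱ + p(ϱ))` in the residual region `ϱ ∉ [a/2, 2b]` and
`E(ϱ|r) ≥ c (ϱ−r)²` in the essential region `ϱ ∈ [a/2, 2b]`. -/
theorem relative_energy_lower_bound (p H : ℝ → ℝ)
    (hp : ContDiffOn ℝ 1 p (Set.Ici 0)) (hp0 : p 0 = 0)
    (hp' : ∀ ϱ > (0 : ℝ), 0 < deriv p ϱ)
    (hH : ∀ ϱ > (0 : ℝ), H ϱ = ϱ * ∫ z in (1 : ℝ)..ϱ, p z / z ^ 2) (hH0 : H 0 = 0)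
    (a' abar : ℝ) (ha' : 0 < a') (haa : a' < abar)
    (hconv₁ : ConvexOn ℝ (Set.Ici 0) (fun ϱ => H ϱ - a' * p ϱ))
    (hconv₂ : ConvexOn ℝ (Set.Ici 0) (fun ϱ => abar * p ϱ - H ϱ)) :
    ∀ a b : ℝ, 0 < a → a < b →
      ∃ c > (0 : ℝ), ∀ ϱ ≥ (0 : ℝ), ∀ r ∈ Set.Icc a b,
        (ϱ ∉ Set.Icc (a / 2) (2 * b) →
          c * (1 + ϱ + p ϱ) ≤ H ϱ - deriv H r * (ϱ - r) - H r) ∧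
        (ϱ ∈ Set.Icc (a / 2) (2 * b) →
          c * (ϱ - r) ^ 2 ≤ H ϱ - deriv H r * (ϱ - r) - H r) := by

  -- p differentiable at positive points
  have pd : ∀ s > (0:ℝ), HasDerivAt p (deriv p s) s := by
    intro s hs
    have h1 : DifferentiableWithinAt ℝ p (Ici 0) s :=
      (hp.differentiableOn one_ne_zero) s (le_of_lt hs)
    exact (h1.differentiableAt (Ici_mem_nhds hs)).hasDerivAt
  -- deriv p continuous on Ioi 0
  have pdc : ContinuousOn (deriv p) (Ioi (0:ℝ)) := by
    have h1 : ContinuousOn (derivWithin p (Ici 0)) (Ici (0:ℝ)) :=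
      hp.continuousOn_derivWithin (uniqueDiffOn_Ici 0) le_rfl
    refine (h1.mono Ioi_subset_Ici_self).congr ?_
    intro s hs
    exact (derivWithin_of_mem_nhds (Ici_mem_nhds hs)).symm
  -- p continuous
  have pc : ContinuousOn p (Ici (0:ℝ)) := hp.continuousOn
  -- F derivative
  set F : ℝ → ℝ := fun x => ∫ z in (1:ℝ)..x, p z / z ^ 2 with hF
  have hFd : ∀ s > (0:ℝ), HasDerivAt F (p s / s ^ 2) s := by
    intro s hs
    have hcont : ContinuousOn (fun z => p z / z ^ 2) (Ioi (0:ℝ)) := by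
      apply ContinuousOn.div (pc.mono Ioi_subset_Ici_self) (by fun_prop)
      intro z hz
      have : (0:ℝ) < z := hz
      positivity
    have hint : IntervalIntegrable (fun z => p z / z ^ 2) MeasureTheory.volume 1 s := by
      apply ContinuousOn.intervalIntegrable
      apply hcont.mono
      rw [uIcc_eq_union]
      rintro z (hz | hz)
      · exact lt_of_lt_of_le one_pos hz.1
      · exact lt_of_lt_of_le hs hz.1
    exact integral_hasDerivAt_right hint
      (hcont.stronglyMeasurableAtFilter isOpen_Ioi s hs)
      (hcont.continuousAt (Ioi_mem_nhds hs))
  set H1 : ℝ → ℝ := fun s => F s + p s / s with hH1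
  have hHd : ∀ s > (0:ℝ), HasDerivAt H (H1 s) s := by
    intro s hs
    have h1 : HasDerivAt (fun x => x * F x) (1 * F s + s * (p s / s ^ 2)) s :=
      (hasDerivAt_id s).mul (hFd s hs)
    have h2 : H =ᶠ[nhds s] fun x => x * F x := by
      filter_upwards [Ioi_mem_nhds hs] with x hx
      exact hH x hx
    have h3 := h1.congr_of_eventuallyEq h2
    refine h3.congr_deriv ?_
    have hs' : s ≠ 0 := ne_of_gt hs
    simp only [hH1]
    field_simp [hH1]
  have hH1d : ∀ s > (0:ℝ), HasDerivAt H1 (deriv p s / s) s := by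
    intro s hs
    have h1 : HasDerivAt (fun x => p x / x) ((deriv p s * s - p s * 1) / s ^ 2) s :=
      (pd s hs).div (hasDerivAt_id s) (ne_of_gt hs)
    have h2 := (hFd s hs).add h1
    refine h2.congr_deriv ?_
    have hs' : s ≠ 0 := ne_of_gt hs
    field_simp
    ring
  have hderivH : ∀ s > (0:ℝ), deriv H s = H1 s := fun s hs => (hHd s hs).deriv
  -- p strictly monotone on Ici 0
  have pmono : StrictMonoOn p (Ici (0:ℝ)) := by
    apply strictMonoOn_of_deriv_pos (convex_Ici 0) pc
    intro s hs
    rw [interior_Ici] at hs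
    exact hp' s hs
  have ppos : ∀ s > (0:ℝ), 0 < p s := by
    intro s hs
    have := pmono (self_mem_Ici : (0:ℝ) ∈ Ici 0) (le_of_lt hs : s ∈ Ici 0) hs
    rwa [hp0] at this
  -- H1 monotone on positives
  have H1mono : ∀ u v : ℝ, 0 < u → u ≤ v → H1 u ≤ H1 v := by
    intro u v hu huv
    have := mono_aux H1 (fun s => deriv p s / s) u v
      (fun s hs => hH1d s (lt_of_lt_of_le hu hs.1))
      (fun s hs => le_of_lt (div_pos (hp' s (hu.trans hs.1)) (hu.trans hs.1)))
    exact this ⟨le_refl u, huv⟩ ⟨huv, le_refl v⟩ huv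
  -- now fix a b
  have MAIN : ∀ a b : ℝ, 0 < a → a < b →
      ∃ c > (0 : ℝ), ∀ ϱ ≥ (0 : ℝ), ∀ r ∈ Set.Icc a b,
        (ϱ ∉ Set.Icc (a / 2) (2 * b) →
          c * (1 + ϱ + p ϱ) ≤ H ϱ - deriv H r * (ϱ - r) - H r) ∧
        (ϱ ∈ Set.Icc (a / 2) (2 * b) →
          c * (ϱ - r) ^ 2 ≤ H ϱ - deriv H r * (ϱ - r) - H r) := by
    intro a b ha hab
    have hb : 0 < b := ha.trans hab
    have ha2 : 0 < a / 2 := by linarith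
    have hIne : (a/2 : ℝ) ≤ 4 * b := by linarith
    have hIsub : Icc (a/2) (4*b) ⊆ Ioi (0:ℝ) := fun s hs => lt_of_lt_of_le ha2 hs.1
    obtain ⟨s₀, hs₀, hmin⟩ := (isCompact_Icc : IsCompact (Icc (a/2) (4*b))).exists_isMinOn
      ⟨a/2, le_refl _, hIne⟩ (pdc.mono hIsub)
    set m := deriv p s₀ with hmdef
    have hm : ∀ s ∈ Icc (a/2) (4*b), m ≤ deriv p s := fun s hs => hmin hs
    have hm0 : 0 < m := hp' s₀ (hIsub hs₀)
    set c₁ := m / (8*b) with hc₁def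
    have hc₁ : 0 < c₁ := div_pos hm0 (by linarith)
    have hfrac : ∀ s ∈ Ioo (a/2) (4*b), 2*c₁ ≤ deriv p s / s := by
      intro s hs
      have hs0 : (0:ℝ) < s := lt_trans ha2 hs.1
      rw [le_div_iff₀ hs0, hc₁def]
      have h1 := hm s (Ioo_subset_Icc_self hs)
      have h2 : 2 * (m / (8*b)) * s ≤ 2 * (m / (8*b)) * (4*b) := by
        apply mul_le_mul_of_nonneg_left hs.2.le
        positivity
      have h3 : 2 * (m / (8*b)) * (4*b) = m := by field_simp; ring
      linarith
    -- monotonicity of H1 s - 2 c₁ s on the window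
    have chi_mono : MonotoneOn (fun s => H1 s - 2*c₁*s) (Icc (a/2) (4*b)) := by
      apply mono_aux _ (fun s => deriv p s / s - 2*c₁)
      · intro s hs
        have hs0 : (0:ℝ) < s := lt_of_lt_of_le ha2 hs.1
        have := (hH1d s hs0).sub ((hasDerivAt_id s).const_mul (2*c₁))
        exact this.congr_deriv (by ring)
      · intro s hs
        have := hfrac s hs
        linarith
    -- quadratic lower bound on the window
    have quad : ∀ r ∈ Icc a b, ∀ x ∈ Icc (a/2) (4*b),
        c₁*(x-r)^2 ≤ H x - H1 r*(x-r) - H r := by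
      intro r hr x hx
      have hrpos : 0 < r := lt_of_lt_of_le ha hr.1
      have hrI : r ∈ Icc (a/2) (4*b) := ⟨by linarith [hr.1], by linarith [hr.2]⟩
      have key := nonneg_aux (fun s => H s - H1 r*(s-r) - H r - c₁*(s-r)^2)
          (fun s => H1 s - H1 r - 2*c₁*(s-r)) (a/2) (4*b) r hrI
          (by
            intro s hs
            have hs0 : (0:ℝ) < s := lt_of_lt_of_le ha2 hs.1
            have h1 := (((hHd s hs0).sub (((hasDerivAt_id s).sub_const r).const_mul (H1 r))).sub_const
              (H r)).sub ((((hasDerivAt_id s).sub_const r).pow 2).const_mul c₁)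
            refine h1.congr_deriv ?_
            simp only [id_eq]
            push_cast
            ring)
          (by
            intro u hu v hv huv
            have := chi_mono hu hv huv
            simp only at this ⊢
            linarith)
          (by ring) (by ring)
      have := key x hx
      linarith
    -- gap : H1 (2b) - H1 b ≥ 2 c₁ b
    have gap : 2*c₁*b ≤ H1 (2*b) - H1 b := by
      have h1 := chi_mono (⟨by linarith, by linarith⟩ : b ∈ Icc (a/2) (4*b))
        (⟨by linarith, by linarith⟩ : 2*b ∈ Icc (a/2) (4*b)) (by linarith)
      simp only at h1
      linarith
    -- linear growth to the right of 2b
    have right_lin : ∀ r ∈ Icc a b, ∀ x, 2*b ≤ x →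
        c₁*b^2 + 2*c₁*b*(x - 2*b) ≤ H x - H1 r*(x-r) - H r := by
      intro r hr x hx
      have hrpos : 0 < r := lt_of_lt_of_le ha hr.1
      have hg : MonotoneOn (fun s => H s - H1 r*(s-r) - H r - 2*c₁*b*s) (Icc (2*b) x) := by
        apply mono_aux _ (fun s => H1 s - H1 r - 2*c₁*b)
        · intro s hs
          have hs0 : (0:ℝ) < s := lt_of_lt_of_le (by linarith) hs.1
          have h1 := (((hHd s hs0).sub (((hasDerivAt_id s).sub_const r).const_mul (H1 r))).sub_const
            (H r)).sub ((hasDerivAt_id s).const_mul (2*c₁*b))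
          refine h1.congr_deriv ?_
          first
          | (simp only [id_eq]; push_cast; ring)
          | (push_cast; ring)
        · intro s hs
          have h1 : H1 (2*b) ≤ H1 s := H1mono (2*b) s (by linarith) hs.1.le
          have h2 : H1 r ≤ H1 b := H1mono r b hrpos hr.2
          linarith
      have h2b : (2*b : ℝ) ∈ Icc (2*b) x := ⟨le_refl _, hx⟩
      have hxI : x ∈ Icc (2*b) x := ⟨hx, le_refl _⟩
      have h3 := hg h2b hxI hx
      simp only at h3
      have h4 := quad r hr (2*b) ⟨by linarith, by linarith⟩
      have h5 : b^2 ≤ (2*b - r)^2 := by nlinarith [hr.2, hrpos.le]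
      nlinarith [hc₁]
    -- left region: E decreasing left of r
    have left_bd : ∀ r ∈ Icc a b, ∀ x, 0 < x → x ≤ a/2 →
        c₁*(a/2)^2 ≤ H x - H1 r*(x-r) - H r := by
      intro r hr x hx0 hxa
      have hrpos : 0 < r := lt_of_lt_of_le ha hr.1
      have hxr : x ≤ r := by linarith [hr.1]
      have hanti : AntitoneOn (fun s => H s - H1 r*(s-r) - H r) (Icc x r) := by
        apply anti_aux _ (fun s => H1 s - H1 r)
        · intro s hs
          have hs0 : (0:ℝ) < s := lt_of_lt_of_le hx0 hs.1
          have h1 := ((hHd s hs0).sub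
            (((hasDerivAt_id s).sub_const r).const_mul (H1 r))).sub_const (H r)
          refine h1.congr_deriv ?_
          first
          | (simp only [id_eq]; push_cast; ring)
          | (push_cast; ring)
        · intro s hs
          have := H1mono s r (lt_of_lt_of_le hx0 hs.1.le) hs.2.le
          linarith
      have h1 := hanti (⟨le_refl x, hxr⟩ : x ∈ Icc x r)
        (⟨hxa, by linarith [hr.1]⟩ : a/2 ∈ Icc x r) hxa
      simp only at h1
      have h2 := quad r hr (a/2) ⟨le_refl _, by linarith⟩
      have h3 : (a/2)^2 ≤ (a/2 - r)^2 := by nlinarith [hr.1]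
      nlinarith [hc₁]
    -- value at zero
    have zero_bd : ∀ r ∈ Icc a b, H 0 - H1 r * (0 - r) - H r = p r := by
      intro r hr
      have hrpos : 0 < r := lt_of_lt_of_le ha hr.1
      have h1 : H r = r * F r := hH r hrpos
      have h2 : H1 r = F r + p r / r := rfl
      rw [hH0, h1, h2]
      field_simp
      ring
    -- convexity-based growth bound for p at infinity
    obtain ⟨Q, hQdef⟩ : ∃ Q : ℝ → ℝ, Q = fun s => H s - a' * p s := ⟨_, rfl⟩
    have hconvQ : ConvexOn ℝ (Set.Ici 0) Q := by rw [hQdef]; exact hconv₁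
    obtain ⟨k, hkdef⟩ : ∃ k : ℝ, k = (Q (2*b) - Q b) / b := ⟨_, rfl⟩
    have hQgrow : ∀ x, 2*b < x → Q (2*b) + k * (x - 2*b) ≤ Q x := by
      intro x hx
      have hslope := hconvQ.slope_mono_adjacent
        (show b ∈ Ici (0:ℝ) from hb.le) (show x ∈ Ici (0:ℝ) by
          simp only [mem_Ici]; linarith)
        (show b < 2*b by linarith) hx
      have h2 : (2*b - b : ℝ) = b := by ring
      rw [h2] at hslope
      rw [div_le_div_iff₀ hb (by linarith)] at hslope
      have hx2 : (0:ℝ) < x - 2*b := by linarith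
      have h3 : (Q (2*b) - Q b) * (x - 2*b) / b ≤ Q x - Q (2*b) := by
        rw [div_le_iff₀ hb]
        linarith
      rw [hkdef, div_mul_eq_mul_div]
      linarith
    -- uniform bound on |H1 r| and |H r| for r in [a,b]
    have hH1c : ContinuousOn H1 (Icc a b) := fun s hs =>
      ((hH1d s (lt_of_lt_of_le ha hs.1)).continuousAt).continuousWithinAt
    have hHc : ContinuousOn H (Icc a b) := fun s hs =>
      ((hHd s (lt_of_lt_of_le ha hs.1)).continuousAt).continuousWithinAt
    obtain ⟨M1, hM1⟩ := (isCompact_Icc : IsCompact (Icc a b)).exists_bound_of_continuousOn hH1c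
    obtain ⟨M2, hM2⟩ := (isCompact_Icc : IsCompact (Icc a b)).exists_bound_of_continuousOn hHc
    set M : ℝ := |M1| + |M2| with hMdef
    have hM0 : 0 ≤ M := by positivity
    have hMb : ∀ r ∈ Icc a b, |H1 r| ≤ M ∧ |H r| ≤ M := by
      intro r hr
      constructor
      · calc |H1 r| ≤ M1 := by simpa using hM1 r hr
          _ ≤ M := by rw [hMdef]; cases abs_cases M1 with
            | inl h => cases abs_cases M2 with
              | inl h2 => linarith [h.1]
              | inr h2 => linarith [h.1]
            | inr h => linarith [abs_nonneg M2, h.1, abs_nonneg (H1 r), (by simpa using hM1 r hr : |H1 r| ≤ M1)]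
      · calc |H r| ≤ M2 := by simpa using hM2 r hr
          _ ≤ M := by rw [hMdef]; linarith [le_abs_self M2, abs_nonneg M1]
    clear_value F H1 m c₁ M
    obtain ⟨K, hKdef⟩ : ∃ K : ℝ, K = 1 + |Q (2*b)| + |k| + 2*M := ⟨_, rfl⟩
    have hK1 : 1 ≤ K := by
      have := abs_nonneg (Q (2*b)); have := abs_nonneg k
      rw [hKdef]; linarith
    have hK0 : 0 < K := by linarith
    have pII : ∀ r ∈ Icc a b, ∀ x, 2*b < x →
        a' * p x - K * (1 + x) ≤ H x - H1 r * (x - r) - H r := by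
      intro r hr x hx
      have hrpos : 0 < r := lt_of_lt_of_le ha hr.1
      have hxpos : 0 < x := by linarith
      obtain ⟨hb1, hb2⟩ := hMb r hr
      have h1 := hQgrow x hx
      have hHx : ∀ y, Q y = H y - a' * p y := fun y => by rw [hQdef]
      have e1 : -|Q (2*b)| ≤ Q (2*b) := neg_abs_le _
      have e2 : -|k| * x ≤ k * (x - 2*b) := by
        have w1 : -|k| * (x - 2*b) ≤ k * (x - 2*b) :=
          mul_le_mul_of_nonneg_right (neg_abs_le k) (by linarith)
        have w2 : -|k| * x ≤ -|k| * (x - 2*b) := by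
          nlinarith [abs_nonneg k, hb]
        linarith
      have e3 : H1 r * (x - r) ≤ M * x := by
        have hxr : 0 ≤ x - r := by linarith [hr.2]
        have w1 : H1 r * (x - r) ≤ |H1 r| * (x - r) :=
          mul_le_mul_of_nonneg_right (le_abs_self _) hxr
        have w2 : |H1 r| * (x - r) ≤ M * x :=
          mul_le_mul hb1 (by linarith) hxr hM0
        linarith
      have e4 : H r ≤ M := (abs_le.mp hb2).2
      have hKx : |Q (2*b)| + |k| * x + M * x + M ≤ K * (1 + x) := by
        rw [hKdef]
        nlinarith [abs_nonneg k, abs_nonneg (Q (2*b)), hM0, hxpos]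
      have hQx : Q (2*b) + k * (x - 2*b) + a' * p x - H1 r * (x - r) - H r
          ≤ H x - H1 r * (x - r) - H r := by
        have : Q (2*b) + k * (x - 2*b) + a' * p x ≤ H x := by
          have := h1
          rw [hHx x, hHx (2*b), hHx b] at *
          linarith
        linarith
      linarith
    obtain ⟨δ, hδdef⟩ : ∃ δ : ℝ, δ = 2*c₁*b := ⟨_, rfl⟩
    have hδ : 0 < δ := by rw [hδdef]; positivity
    obtain ⟨θ, hθdef⟩ : ∃ θ : ℝ, θ = min (1/2) (min (δ/(8*K)) (c₁*b^2/(8*K))) := ⟨_, rfl⟩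
    have hθ0 : 0 < θ := by
      rw [hθdef]
      apply lt_min (by norm_num)
      exact lt_min (by positivity) (by positivity)
    have hθhalf : θ ≤ 1/2 := by rw [hθdef]; exact min_le_left _ _
    have hθ1 : 1/2 ≤ 1 - θ := by linarith
    have hKne : K ≠ 0 := ne_of_gt hK0
    have hθK1 : θ * K ≤ δ/8 := by
      have h1 : θ ≤ δ/(8*K) := by
        rw [hθdef]; exact le_trans (min_le_right _ _) (min_le_left _ _)
      calc θ * K ≤ δ/(8*K) * K := mul_le_mul_of_nonneg_right h1 hK0.le
        _ = δ/8 := by field_simp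
    have hθK2 : θ * K ≤ c₁*b^2/8 := by
      have h1 : θ ≤ c₁*b^2/(8*K) := by
        rw [hθdef]; exact le_trans (min_le_right _ _) (min_le_right _ _)
      calc θ * K ≤ c₁*b^2/(8*K) * K := mul_le_mul_of_nonneg_right h1 hK0.le
        _ = c₁*b^2/8 := by field_simp
    obtain ⟨cfar, hcfardef⟩ : ∃ cf : ℝ, cf = min (θ*a') (min (3*c₁*b^2/8) (δ/8)) := ⟨_, rfl⟩
    have hcfar0 : 0 < cfar := by
      rw [hcfardef]
      apply lt_min (mul_pos hθ0 ha')
      exact lt_min (by positivity) (by linarith [hδ])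
    have far : ∀ r ∈ Icc a b, ∀ x, 4*b ≤ x →
        cfar * (1 + x + p x) ≤ H x - H1 r * (x - r) - H r := by
      intro r hr x hx
      have hxpos : 0 < x := by linarith
      have hpx : 0 ≤ p x := (ppos x hxpos).le
      have hI : c₁*b^2 + (δ/2)*x ≤ H x - H1 r * (x - r) - H r := by
        rw [hδdef]
        have h1 := right_lin r hr x (by linarith)
        have h2 : x/2 ≤ x - 2*b := by linarith
        have h3 : 0 ≤ c₁ * b * (x - 4*b) := by
          apply mul_nonneg (mul_nonneg hc₁.le hb.le)
          linarith
        nlinarith only [h1, h3]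
      have hII := pII r hr x (by linarith)
      have comb : θ*(a' * p x - K*(1+x)) + (1-θ)*(c₁*b^2 + (δ/2)*x)
          ≤ H x - H1 r * (x - r) - H r := by
        have c1 := mul_le_mul_of_nonneg_left hII hθ0.le
        have c2 := mul_le_mul_of_nonneg_left hI (by linarith : (0:ℝ) ≤ 1-θ)
        have c3 : θ*(H x - H1 r * (x - r) - H r) + (1-θ)*(H x - H1 r * (x - r) - H r)
            = H x - H1 r * (x - r) - H r := by ring
        linarith only [c1, c2, c3]
      have t1 : θ*K*x ≤ (δ/8)*x := mul_le_mul_of_nonneg_right hθK1 hxpos.le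
      have s1 : (1/2)*(c₁*b^2) ≤ (1-θ)*(c₁*b^2) :=
        mul_le_mul_of_nonneg_right hθ1 (by positivity)
      have s2 : (1/2)*((δ/2)*x) ≤ (1-θ)*((δ/2)*x) :=
        mul_le_mul_of_nonneg_right hθ1 (by positivity)
      have step1 : θ*a'*p x + 3*c₁*b^2/8 + (δ/8)*x ≤ H x - H1 r * (x - r) - H r := by
        nlinarith only [comb, t1, hθK2, s1, s2]
      have m1 : cfar ≤ θ*a' := by rw [hcfardef]; exact min_le_left _ _
      have m2 : cfar ≤ 3*c₁*b^2/8 := by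
        rw [hcfardef]; exact le_trans (min_le_right _ _) (min_le_left _ _)
      have m3 : cfar ≤ δ/8 := by
        rw [hcfardef]; exact le_trans (min_le_right _ _) (min_le_right _ _)
      have u1 : cfar * p x ≤ θ*a'*p x := mul_le_mul_of_nonneg_right m1 hpx
      have u2 : cfar * x ≤ (δ/8)*x := mul_le_mul_of_nonneg_right m3 hxpos.le
      have expand : cfar * (1 + x + p x) = cfar + cfar * x + cfar * p x := by ring
      linarith only [step1, u1, u2, m2, expand]
    -- p is nonnegative
    have pnn : ∀ s ≥ (0:ℝ), 0 ≤ p s := by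
      intro s hs
      rcases eq_or_lt_of_le hs with h | h
      · rw [← h, hp0]
      · exact (ppos s h).le
    -- final constants
    obtain ⟨CL, hCLdef⟩ : ∃ C : ℝ, C = 1 + a/2 + p (a/2) := ⟨_, rfl⟩
    obtain ⟨CR, hCRdef⟩ : ∃ C : ℝ, C = 1 + 4*b + p (4*b) := ⟨_, rfl⟩
    have hCL1 : 1 ≤ CL := by
      have := (ppos (a/2) ha2).le
      rw [hCLdef]; linarith
    have hCR1 : 1 ≤ CR := by
      have := (ppos (4*b) (by linarith)).le
      rw [hCRdef]; linarith
    have hCL0 : 0 < CL := by linarith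
    have hCR0 : 0 < CR := by linarith
    obtain ⟨eL, heLdef⟩ : ∃ e : ℝ, e = min (c₁*(a/2)^2) (p a) := ⟨_, rfl⟩
    have heL0 : 0 < eL := by rw [heLdef]; exact lt_min (by positivity) (ppos a ha)
    obtain ⟨c, hcdef⟩ : ∃ c : ℝ, c = min c₁ (min (eL/CL) (min ((c₁*b^2)/CR) cfar)) := ⟨_, rfl⟩
    have hc0 : 0 < c := by
      rw [hcdef]
      apply lt_min hc₁
      apply lt_min (div_pos heL0 hCL0)
      exact lt_min (div_pos (by positivity) hCR0) hcfar0
    refine ⟨c, hc0, ?_⟩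
    intro ϱ hϱ r hr
    have hrpos : 0 < r := lt_of_lt_of_le ha hr.1
    have hEnn : 0 ≤ 1 + ϱ + p ϱ := by
      have := pnn ϱ hϱ; linarith
    rw [hderivH r hrpos]
    constructor
    · intro hnot
      have hcase : ϱ < a/2 ∨ 2*b < ϱ := by
        by_contra hcon
        push_neg at hcon
        exact hnot ⟨hcon.1, hcon.2⟩
      rcases hcase with hL | hR
      · -- left region
        have hbound : 1 + ϱ + p ϱ ≤ CL := by
          have := pmono.monotoneOn (mem_Ici.mpr hϱ) (mem_Ici.mpr ha2.le) hL.le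
          rw [hCLdef]; linarith
        have hE : eL ≤ H ϱ - H1 r * (ϱ - r) - H r := by
          rw [heLdef]
          rcases eq_or_lt_of_le hϱ with h0 | h0
          · rw [← h0, zero_bd r hr]
            exact le_trans (min_le_right _ _)
              (pmono.monotoneOn (mem_Ici.mpr ha.le) (mem_Ici.mpr hrpos.le) hr.1)
          · exact le_trans (min_le_left _ _) (left_bd r hr ϱ h0 hL.le)
        have hcc : c ≤ eL/CL := by
          rw [hcdef]; exact le_trans (min_le_right _ _) (min_le_left _ _)
        calc c * (1 + ϱ + p ϱ) ≤ (eL/CL) * CL :=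
              mul_le_mul hcc hbound hEnn (le_of_lt (div_pos heL0 hCL0))
          _ = eL := div_mul_cancel₀ _ (ne_of_gt hCL0)
          _ ≤ _ := hE
      · rcases le_or_gt ϱ (4*b) with h4 | h4
        · -- middle right region
          have hbound : 1 + ϱ + p ϱ ≤ CR := by
            have := pmono.monotoneOn (mem_Ici.mpr hϱ) (mem_Ici.mpr (by linarith : (0:ℝ) ≤ 4*b)) h4
            rw [hCRdef]; linarith
          have hE : c₁*b^2 ≤ H ϱ - H1 r * (ϱ - r) - H r := by
            have h1 := right_lin r hr ϱ hR.le
            have h3 : 0 ≤ 2 * c₁ * b * (ϱ - 2*b) := by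
              apply mul_nonneg (by positivity)
              linarith
            linarith only [h1, h3]
          have hcc : c ≤ (c₁*b^2)/CR := by
            rw [hcdef]
            exact le_trans (min_le_right _ _) (le_trans (min_le_right _ _) (min_le_left _ _))
          calc c * (1 + ϱ + p ϱ) ≤ ((c₁*b^2)/CR) * CR :=
                mul_le_mul hcc hbound hEnn (le_of_lt (div_pos (by positivity) hCR0))
            _ = c₁*b^2 := div_mul_cancel₀ _ (ne_of_gt hCR0)
            _ ≤ _ := hE
        · -- far region
          have hcc : c ≤ cfar := by
            rw [hcdef]
            exact le_trans (min_le_right _ _) (le_trans (min_le_right _ _) (min_le_right _ _))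
          calc c * (1 + ϱ + p ϱ) ≤ cfar * (1 + ϱ + p ϱ) :=
                mul_le_mul_of_nonneg_right hcc hEnn
            _ ≤ _ := far r hr ϱ h4.le
    · intro hin
      have h1 := quad r hr ϱ ⟨hin.1, by linarith [hin.2]⟩
      have hcc : c ≤ c₁ := by rw [hcdef]; exact min_le_left _ _
      have h2 := mul_le_mul_of_nonneg_right hcc (sq_nonneg (ϱ - r))
      linarith only [h1, h2]
  exact MAIN
end
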